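/- Let X and Z be complex Hilbert spaces, E a bounded linear operator from X to Z, and A a densely defined closed operator from X to Z. Then the operator pencil (E,A) is dissipative (i.e., ‖(λE−A)x‖ ≥ λ‖Ex‖ for all λ>0 and x in the domain of A) if and only if Re⟨Ax, Ex⟩ ≤ 0 for all x in the domain of A. -/

import Mathlib

open scoped InnerProductSpace

lemma key_expand {Z : Type*} [NormedAddCommGroup Z] [InnerProductSpace ℂ Z]
    (u v : Z) (l : ℝ) :
    ‖(l : ℂ) • u - v‖ ^ 2 = l ^ 2 * ‖u‖ ^ 2 - 2 * l * (⟪v, u⟫_ℂ).re + ‖v‖ ^ 2 := by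
  have h := @norm_sub_sq ℂ Z _ _ _ ((l : ℂ) • u) v
  have h1 : ⟪(l : ℂ) • u, v⟫_ℂ = (starRingEnd ℂ) (l : ℂ) * ⟪u, v⟫_ℂ := inner_smul_left _ _ _
  have h2 : (⟪(l : ℂ) • u, v⟫_ℂ).re = l * (⟪u, v⟫_ℂ).re := by
    rw [h1, Complex.conj_ofReal]; simp [Complex.mul_re]
  have h3 : (⟪u, v⟫_ℂ).re = (⟪v, u⟫_ℂ).re := inner_re_symm (𝕜 := ℂ) u v
  have h4 : ‖(l : ℂ) • u‖ ^ 2 = l ^ 2 * ‖u‖ ^ 2 := by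
    rw [norm_smul]; rw [mul_pow]; congr 1; simp [Complex.norm_real, sq_abs]
  simp only [RCLike.re_to_complex] at h
  rw [h, h2, h3, h4]; ring

theorem stmt0 {X Z : Type*}
    [NormedAddCommGroup X] [InnerProductSpace ℂ X] [CompleteSpace X]
    [NormedAddCommGroup Z] [InnerProductSpace ℂ Z] [CompleteSpace Z]
    (E : X →L[ℂ] Z) (A : X →ₗ.[ℂ] Z)
    (hdense : Dense (A.domain : Set X))
    (hclosed : IsClosed (A.graph : Set (X × Z))) :
    (∀ l : ℝ, 0 < l → ∀ x : A.domain, l * ‖E (x : X)‖ ≤ ‖(l : ℂ) • E (x : X) - A x‖)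
      ↔ (∀ x : A.domain, (⟪A x, E (x : X)⟫_ℂ).re ≤ 0) := by
  constructor
  · intro h x
    by_contra hpos
    push_neg at hpos
    set r := (⟪A x, E (x : X)⟫_ℂ).re with hr
    set l : ℝ := (‖A x‖ ^ 2 + 1) / (2 * r) with hl
    have hlpos : 0 < l := by positivity
    have := h l hlpos x
    have hsq : (l * ‖E (x : X)‖) ^ 2 ≤ ‖(l : ℂ) • E (x : X) - A x‖ ^ 2 := by
      apply pow_le_pow_left₀ (by positivity) this
    rw [key_expand] at hsq
    have : 2 * l * r = ‖A x‖ ^ 2 + 1 := by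
      field_simp [hl]
      rw [hl, mul_div_assoc', div_mul_eq_mul_div, div_eq_iff (ne_of_gt (by linarith))]
      ring
    nlinarith [norm_nonneg (E (x : X)), norm_nonneg (A x)]
  · intro h l hl x
    have hsq : (l * ‖E (x : X)‖) ^ 2 ≤ ‖(l : ℂ) • E (x : X) - A x‖ ^ 2 := by
      rw [key_expand]
      nlinarith [h x, norm_nonneg (A x)]
    nlinarith [norm_nonneg ((l : ℂ) • E (x : X) - A x), norm_nonneg (E (x : X)), hl.le,
      mul_nonneg hl.le (norm_nonneg (E (x : X)))]
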